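/- arXiv:2311.18305 — 2 statements merged into one kernel-verified Lean document; each statement's English description precedes it below -/
import Mathlib

section
/- For every x ∈ ℝ^n, the block Kaczmarz iterates converge to the solution: lim_{k→∞} P^k(x) = x*, where x* is the unique point with A x* = b and x* ∈ x + R(Aᵀ). -/
open scoped RealInnerProductSpace

noncomputable section

abbrev Euc (n : ℕ) := EuclideanSpace ℝ (Fin n)

/-- Intermediate Kaczmarz chain: `chainK Pj x j` is `y_j` with `y_0 = x`, `y_{j+1} = P_{j+1}(y_j)`. -/
def chainK {n p : ℕ} (Pj : Fin p → Euc n → Euc n) (x : Euc n) : ℕ → Euc n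
  | 0 => x
  | j + 1 => if h : j < p then Pj ⟨j, h⟩ (chainK Pj x j) else chainK Pj x j

/-- The block Kaczmarz operator `P = P_p ∘ ⋯ ∘ P_1`. -/
def kacz {n p : ℕ} (Pj : Fin p → Euc n → Euc n) (x : Euc n) : Euc n := chainK Pj x p

/-- `f` sends each point to the (unique) nearest point of `S`. -/
def IsNearestPointMap {n : ℕ} (S : Set (Euc n)) (f : Euc n → Euc n) : Prop :=
  ∀ x, f x ∈ S ∧ ∀ y ∈ S, dist x (f x) ≤ dist x y

/-- The stacked (full) matrix `A` with blocks `A_j`. -/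
def fullA {n p : ℕ} (m : Fin p → ℕ)
    (A : ∀ j : Fin p, Euc n →ₗ[ℝ] Euc (m j)) :
    Euc n →ₗ[ℝ] PiLp 2 (fun j => Euc (m j)) :=
  (WithLp.linearEquiv 2 ℝ (∀ j, Euc (m j))).symm.toLinearMap ∘ₗ LinearMap.pi A

/-- The range of `Aᵀ` for the stacked matrix. -/
def RAT {n p : ℕ} (m : Fin p → ℕ)
    (A : ∀ j : Fin p, Euc n →ₗ[ℝ] Euc (m j)) : Submodule ℝ (Euc n) :=
  LinearMap.range (LinearMap.adjoint (fullA m A))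

/-- Orthogonal projection onto a subspace, as an endomorphism. -/
def projSub {n : ℕ} (K : Submodule ℝ (Euc n)) : Euc n →ₗ[ℝ] Euc n :=
  K.subtype ∘ₗ (K.orthogonalProjectionOnto).toLinearMap

/-- `Tchain m A j = Q_j ∘ ⋯ ∘ Q_1`, with `Q_i` the orthogonal projection onto `N(A_i)`. -/
def Tchain {n p : ℕ} (m : Fin p → ℕ)
    (A : ∀ j : Fin p, Euc n →ₗ[ℝ] Euc (m j)) :
    ℕ → (Euc n →ₗ[ℝ] Euc n)
  | 0 => LinearMap.id
  | j + 1 => if h : j < p then projSub (LinearMap.ker (A ⟨j, h⟩)) ∘ₗ Tchain m A j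
             else Tchain m A j

/-- `T = Q_p ∘ ⋯ ∘ Q_1`. -/
def Tmap {n p : ℕ} (m : Fin p → ℕ)
    (A : ∀ j : Fin p, Euc n →ₗ[ℝ] Euc (m j)) : Euc n →ₗ[ℝ] Euc n :=
  Tchain m A p

/-- `C = I - T`. -/
def Cmap {n p : ℕ} (m : Fin p → ℕ)
    (A : ∀ j : Fin p, Euc n →ₗ[ℝ] Euc (m j)) : Euc n →ₗ[ℝ] Euc n :=
  LinearMap.id - Tmap m A

/-- The Krylov space `K_k(C, r) = span(r, Cr, …, C^{k-1} r)`. -/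
def krylov {n : ℕ} (C : Euc n →ₗ[ℝ] Euc n) (r : Euc n) (k : ℕ) : Submodule ℝ (Euc n) :=
  Submodule.span ℝ {v | ∃ i < k, v = (C ^ i) r}

/-- `z` is the unique minimizer of `‖x - xs‖²` over `S`. -/
def IsUniqueMinimizer {n : ℕ} (xs : Euc n) (S : Set (Euc n)) (z : Euc n) : Prop :=
  z ∈ S ∧ ∀ y ∈ S, y ≠ z → ‖z - xs‖ ^ 2 < ‖y - xs‖ ^ 2

/-- The affine Krylov space `x₀ + K_k(C, r)` as a set. -/
def affKrylov {n : ℕ} (x0 : Euc n) (C : Euc n →ₗ[ℝ] Euc n) (r : Euc n) (k : ℕ) :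
    Set (Euc n) :=
  (fun v => x0 + v) '' (krylov C r k : Set (Euc n))


lemma projSub_mem {n : ℕ} (K : Submodule ℝ (Euc n)) (v : Euc n) : projSub K v ∈ K :=
  (K.orthogonalProjectionOnto v).2

lemma projSub_eq_self {n : ℕ} (K : Submodule ℝ (Euc n)) {v : Euc n} (hv : v ∈ K) :
    projSub K v = v := K.starProjection_eq_self_iff.mpr hv

lemma sub_projSub_mem_orthogonal {n : ℕ} (K : Submodule ℝ (Euc n)) (v : Euc n) :
    v - projSub K v ∈ Kᗮ := K.sub_starProjection_mem_orthogonal v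

lemma pythag {n : ℕ} {a b : Euc n} (h : ⟪a, b⟫ = 0) :
    ‖a + b‖ ^ 2 = ‖a‖ ^ 2 + ‖b‖ ^ 2 := by
  rw [norm_add_sq_real, h]; ring

lemma projSub_pythag {n : ℕ} (K : Submodule ℝ (Euc n)) (v : Euc n) :
    ‖v‖ ^ 2 = ‖v - projSub K v‖ ^ 2 + ‖projSub K v‖ ^ 2 := by
  have h : ⟪v - projSub K v, projSub K v⟫ = 0 := by
    rw [real_inner_comm]; exact (sub_projSub_mem_orthogonal K v) _ (projSub_mem K v)
  have := pythag h
  rwa [sub_add_cancel] at this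

lemma projSub_norm_le {n : ℕ} (K : Submodule ℝ (Euc n)) (v : Euc n) :
    ‖projSub K v‖ ≤ ‖v‖ := by
  have h2 := projSub_pythag K v
  nlinarith [norm_nonneg (v - projSub K v), norm_nonneg (projSub K v), norm_nonneg v]

lemma projSub_norm_lt {n : ℕ} (K : Submodule ℝ (Euc n)) {v : Euc n} (hv : v ∉ K) :
    ‖projSub K v‖ < ‖v‖ := by
  have h2 := projSub_pythag K v
  have hne : v - projSub K v ≠ 0 := by
    intro h0
    have h1 : v = projSub K v := sub_eq_zero.mp h0
    exact hv (h1 ▸ projSub_mem K v)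
  have : 0 < ‖v - projSub K v‖ := norm_pos_iff.mpr hne
  nlinarith [norm_nonneg (projSub K v), norm_nonneg v]

/-- The nearest point map onto the affine solution set is `xs + Q_j (· - xs)`. -/
lemma nearest_eq {n m : ℕ} (B : Euc n →ₗ[ℝ] Euc m) (c : Euc m)
    (f : Euc n → Euc n) (hf : IsNearestPointMap {z : Euc n | B z = c} f)
    (xs : Euc n) (hxs : B xs = c) (x : Euc n) :
    f x = xs + projSub (LinearMap.ker B) (x - xs) := by
  set K := LinearMap.ker B
  set y := xs + projSub K (x - xs) with hy
  have hyS : B y = c := by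
    have : B (projSub K (x - xs)) = 0 := projSub_mem K (x - xs)
    rw [hy, map_add, this, add_zero, hxs]
  -- Pythagoras against any point of the solution set
  have key : ∀ z, B z = c → ‖x - z‖ ^ 2 = ‖x - y‖ ^ 2 + ‖y - z‖ ^ 2 := by
    intro z hz
    have hxy : x - y ∈ Kᗮ := by
      have : x - y = (x - xs) - projSub K (x - xs) := by rw [hy]; abel
      rw [this]; exact sub_projSub_mem_orthogonal K (x - xs)
    have hyz : y - z ∈ K := by
      have : B (y - z) = 0 := by rw [map_sub, hyS, hz, sub_self]
      exact this
    have hinner : ⟪x - y, y - z⟫ = 0 := by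
      rw [real_inner_comm]; exact hxy _ hyz
    have : x - z = (x - y) + (y - z) := by abel
    rw [this, pythag hinner]
  obtain ⟨hmem, hmin⟩ := hf x
  have h1 : dist x (f x) ≤ dist x y := hmin y hyS
  have h2 : ‖x - f x‖ ^ 2 = ‖x - y‖ ^ 2 + ‖y - f x‖ ^ 2 := key _ hmem
  have h1' : ‖x - f x‖ ≤ ‖x - y‖ := by
    rwa [dist_eq_norm, dist_eq_norm] at h1
  have h3 : ‖y - f x‖ ^ 2 ≤ 0 := by
    nlinarith [norm_nonneg (x - f x), norm_nonneg (x - y)]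
  have h4 : ‖y - f x‖ = 0 := by
    nlinarith [norm_nonneg (y - f x)]
  have h5 : y = f x := sub_eq_zero.mp (norm_eq_zero.mp h4)
  exact h5.symm


lemma chainK_eq {n p : ℕ} (msz : Fin p → ℕ) (A : ∀ j : Fin p, Euc n →ₗ[ℝ] Euc (msz j))
    (b : ∀ j, Euc (msz j)) (Pj : Fin p → Euc n → Euc n)
    (hPj : ∀ j : Fin p, IsNearestPointMap {z : Euc n | A j z = b j} (Pj j))
    (xs : Euc n) (hxs : ∀ j, A j xs = b j) (x : Euc n) :
    ∀ j, chainK Pj x j = xs + Tchain msz A j (x - xs) := by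
  intro j
  induction j with
  | zero => simp [chainK, Tchain]
  | succ j ih =>
    by_cases h : j < p
    · rw [show chainK Pj x (j+1) = Pj ⟨j,h⟩ (chainK Pj x j) from by simp [chainK, h],
        show Tchain msz A (j+1) = projSub (LinearMap.ker (A ⟨j,h⟩)) ∘ₗ Tchain msz A j from by
          simp [Tchain, h]]
      rw [ih, nearest_eq (A ⟨j,h⟩) (b ⟨j,h⟩) _ (hPj ⟨j,h⟩) xs (hxs ⟨j,h⟩)]
      simp
    · rw [show chainK Pj x (j+1) = chainK Pj x j from by simp [chainK, h],
        show Tchain msz A (j+1) = Tchain msz A j from by simp [Tchain, h]]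
      exact ih

lemma projSub_orth_mem {n : ℕ} {K L : Submodule ℝ (Euc n)} (hKL : K ≤ L) {v : Euc n}
    (hv : v ∈ Kᗮ) : projSub L v ∈ Kᗮ := by
  rw [Submodule.mem_orthogonal'] at hv ⊢
  intro k hk
  have h1 : ⟪projSub L v, k⟫ = ⟪v, projSub L k⟫ :=
    L.inner_starProjection_left_eq_right v k
  rw [h1, projSub_eq_self L (hKL hk)]
  exact hv k hk

lemma Tchain_orth_mem {n p : ℕ} (msz : Fin p → ℕ) (A : ∀ j : Fin p, Euc n →ₗ[ℝ] Euc (msz j))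
    {v : Euc n} (hv : v ∈ (⨅ j, LinearMap.ker (A j))ᗮ) :
    ∀ j, Tchain msz A j v ∈ (⨅ j, LinearMap.ker (A j))ᗮ := by
  intro j
  induction j with
  | zero => simpa [Tchain] using hv
  | succ j ih =>
    by_cases h : j < p
    · rw [show Tchain msz A (j+1) = projSub (LinearMap.ker (A ⟨j,h⟩)) ∘ₗ Tchain msz A j from by
          simp [Tchain, h]]
      exact projSub_orth_mem (iInf_le _ _) ih
    · rw [show Tchain msz A (j+1) = Tchain msz A j from by simp [Tchain, h]]
      exact ih

lemma Tchain_norm_le {n p : ℕ} (msz : Fin p → ℕ) (A : ∀ j : Fin p, Euc n →ₗ[ℝ] Euc (msz j))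
    (v : Euc n) : ∀ j, ‖Tchain msz A j v‖ ≤ ‖v‖ := by
  intro j
  induction j with
  | zero => simp [Tchain]
  | succ j ih =>
    by_cases h : j < p
    · rw [show Tchain msz A (j+1) = projSub (LinearMap.ker (A ⟨j,h⟩)) ∘ₗ Tchain msz A j from by
          simp [Tchain, h]]
      exact le_trans (projSub_norm_le _ _) ih
    · rw [show Tchain msz A (j+1) = Tchain msz A j from by simp [Tchain, h]]
      exact ih

lemma Tmap_norm_lt {n p : ℕ} (msz : Fin p → ℕ) (A : ∀ j : Fin p, Euc n →ₗ[ℝ] Euc (msz j))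
    {v : Euc n} (hv : v ∈ (⨅ j, LinearMap.ker (A j))ᗮ) (hv0 : v ≠ 0) :
    ‖Tmap msz A v‖ < ‖v‖ := by
  have claim : ∀ j, ‖Tchain msz A j v‖ < ‖v‖ ∨
      ((∀ i : Fin p, (i : ℕ) < j → v ∈ LinearMap.ker (A i)) ∧ Tchain msz A j v = v) := by
    intro j
    induction j with
    | zero => right; exact ⟨fun i hi => absurd hi (Nat.not_lt_zero _), rfl⟩
    | succ j ih =>
      by_cases h : j < p
      · rw [show Tchain msz A (j+1) = projSub (LinearMap.ker (A ⟨j,h⟩)) ∘ₗ Tchain msz A j from by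
            simp [Tchain, h]]
        rcases ih with hlt | ⟨hker, heq⟩
        · left
          simp only [LinearMap.comp_apply]
          exact lt_of_le_of_lt (projSub_norm_le _ _) hlt
        · by_cases hvk : v ∈ LinearMap.ker (A ⟨j,h⟩)
          · right
            constructor
            · intro i hi
              rcases Nat.lt_succ_iff_lt_or_eq.mp hi with hi' | hi'
              · exact hker i hi'
              · have : i = ⟨j, h⟩ := Fin.ext hi'
                rw [this]; exact hvk
            · simp only [LinearMap.comp_apply, heq]
              exact projSub_eq_self _ hvk
          · left
            simp only [LinearMap.comp_apply, heq]
            exact projSub_norm_lt _ hvk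
      · rw [show Tchain msz A (j+1) = Tchain msz A j from by simp [Tchain, h]]
        rcases ih with hlt | ⟨hker, heq⟩
        · left; exact hlt
        · right
          exact ⟨fun i hi => hker i (lt_of_lt_of_le i.2 (Nat.not_lt.mp h)), heq⟩
  rcases claim p with hlt | ⟨hker, heq⟩
  · exact hlt
  · exfalso
    have hmem : v ∈ ⨅ j, LinearMap.ker (A j) := by
      rw [Submodule.mem_iInf]
      intro i
      exact hker i i.2
    rw [Submodule.mem_orthogonal] at hv
    exact hv0 (inner_self_eq_zero.mp (hv v hmem))

lemma exists_contraction {n : ℕ} (T : Euc n →ₗ[ℝ] Euc n) (W : Submodule ℝ (Euc n))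
    (hlt : ∀ v ∈ W, v ≠ 0 → ‖T v‖ < ‖v‖) :
    ∃ c : ℝ, 0 ≤ c ∧ c < 1 ∧ ∀ v ∈ W, ‖T v‖ ≤ c * ‖v‖ := by
  by_cases hbot : ∀ v ∈ W, v = (0 : Euc n)
  · refine ⟨0, le_refl _, one_pos, fun v hv => ?_⟩
    rw [hbot v hv]
    simp
  · push_neg at hbot
    obtain ⟨v0, hv0W, hv00⟩ := hbot
    set S : Set (Euc n) := (W : Set (Euc n)) ∩ Metric.sphere 0 1 with hS
    have hSc : IsCompact S :=
      IsCompact.inter_left (isCompact_sphere 0 1) (Submodule.closed_of_finiteDimensional W)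
    have hSne : S.Nonempty := by
      refine ⟨‖v0‖⁻¹ • v0, W.smul_mem _ hv0W, ?_⟩
      rw [mem_sphere_zero_iff_norm, norm_smul, norm_inv, norm_norm,
        inv_mul_cancel₀ (norm_ne_zero_iff.mpr hv00)]
    have hcont : ContinuousOn (fun v => ‖T v‖) S :=
      (T.continuous_of_finiteDimensional.norm).continuousOn
    obtain ⟨v1, hv1S, hmax⟩ := hSc.exists_isMaxOn hSne hcont
    have hv1n : ‖v1‖ = 1 := mem_sphere_zero_iff_norm.mp hv1S.2
    have hv10 : v1 ≠ 0 := by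
      intro h; rw [h, norm_zero] at hv1n; exact one_ne_zero hv1n.symm
    refine ⟨‖T v1‖, norm_nonneg _, ?_, ?_⟩
    · have := hlt v1 hv1S.1 hv10
      rwa [hv1n] at this
    · intro v hvW
      by_cases hv0 : v = 0
      · rw [hv0]; simp
      · have hvn : ‖v‖ ≠ 0 := norm_ne_zero_iff.mpr hv0
        have huS : (‖v‖⁻¹ • v) ∈ S := by
          refine ⟨W.smul_mem _ hvW, ?_⟩
          rw [mem_sphere_zero_iff_norm, norm_smul, norm_inv, norm_norm, inv_mul_cancel₀ hvn]
        have hle : ‖T (‖v‖⁻¹ • v)‖ ≤ ‖T v1‖ := hmax huS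
        rw [map_smul, norm_smul, norm_inv, norm_norm] at hle
        have hpos : (0:ℝ) < ‖v‖ := lt_of_le_of_ne (norm_nonneg _) (Ne.symm hvn)
        calc ‖T v‖ = ‖v‖ * (‖v‖⁻¹ * ‖T v‖) := by field_simp
        _ ≤ ‖v‖ * ‖T v1‖ := by exact mul_le_mul_of_nonneg_left hle (le_of_lt hpos)
        _ = ‖T v1‖ * ‖v‖ := mul_comm _ _

lemma RAT_le_orth {n p : ℕ} (msz : Fin p → ℕ) (A : ∀ j : Fin p, Euc n →ₗ[ℝ] Euc (msz j)) :
    RAT msz A ≤ (⨅ j, LinearMap.ker (A j))ᗮ := by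
  rintro u ⟨w, rfl⟩
  rw [Submodule.mem_orthogonal']
  intro k hk
  rw [LinearMap.adjoint_inner_left]
  have hFk : fullA msz A k = 0 := by
    have hpi : LinearMap.pi A k = 0 := by
      funext j
      have : k ∈ LinearMap.ker (A j) := (Submodule.mem_iInf _).mp hk j
      exact this
    simp [fullA, hpi]
  rw [hFk, inner_zero_right]

theorem stmt5
    {n p : ℕ} (msz : Fin p → ℕ)
    (A : ∀ j : Fin p, Euc n →ₗ[ℝ] Euc (msz j))
    (b : ∀ j : Fin p, Euc (msz j))
    (hcons : ∃ z : Euc n, ∀ j, A j z = b j)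
    (Pj : Fin p → Euc n → Euc n)
    (hPj : ∀ j : Fin p, IsNearestPointMap {z : Euc n | A j z = b j} (Pj j))
    (x xs : Euc n) (hxs : ∀ j, A j xs = b j) (hxs' : xs - x ∈ RAT msz A) :
    Filter.Tendsto (fun k => (kacz Pj)^[k] x) Filter.atTop (nhds xs) := by
  set K := ⨅ j, LinearMap.ker (A j) with hK
  set T := Tmap msz A with hT
  set v := x - xs with hv
  have hvW : v ∈ Kᗮ := by
    have h1 : xs - x ∈ Kᗮ := RAT_le_orth msz A hxs'
    have : v = -(xs - x) := by rw [hv]; abel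
    rw [this]
    exact Kᗮ.neg_mem h1
  have hTW : ∀ u ∈ Kᗮ, T u ∈ Kᗮ := fun u hu => Tchain_orth_mem msz A hu p
  have hTlt : ∀ u ∈ Kᗮ, u ≠ 0 → ‖T u‖ < ‖u‖ := fun u hu hu0 => Tmap_norm_lt msz A hu hu0
  obtain ⟨c, hc0, hc1, hc⟩ := exists_contraction T Kᗮ hTlt
  have hkacz : ∀ y : Euc n, kacz Pj y = xs + T (y - xs) := fun y =>
    chainK_eq msz A b Pj hPj xs hxs y p
  have hiter : ∀ k, (kacz Pj)^[k] x = xs + (T ^ k) v := by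
    intro k
    induction k with
    | zero => simp [hv]
    | succ k ih =>
      rw [Function.iterate_succ_apply', ih, hkacz, add_sub_cancel_left, pow_succ']
      rfl
  have hbound : ∀ k, (T ^ k) v ∈ Kᗮ ∧ ‖(T ^ k) v‖ ≤ c ^ k * ‖v‖ := by
    intro k
    induction k with
    | zero => simpa using hvW
    | succ k ih =>
      obtain ⟨ihW, ihn⟩ := ih
      have heq : (T ^ (k+1)) v = T ((T ^ k) v) := by
        rw [pow_succ']; rfl
      constructor
      · rw [heq]; exact hTW _ ihW
      · rw [heq]
        calc ‖T ((T ^ k) v)‖ ≤ c * ‖(T ^ k) v‖ := hc _ ihW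
        _ ≤ c * (c ^ k * ‖v‖) := mul_le_mul_of_nonneg_left ihn hc0
        _ = c ^ (k+1) * ‖v‖ := by ring
  rw [← tendsto_sub_nhds_zero_iff]
  apply squeeze_zero_norm (a := fun k => c ^ k * ‖v‖)
  · intro k
    rw [hiter k, add_sub_cancel_left]
    exact (hbound k).2
  · have h1 : Filter.Tendsto (fun k : ℕ => c ^ k) Filter.atTop (nhds 0) :=
      tendsto_pow_atTop_nhds_zero_of_lt_one hc0 hc1
    simpa using h1.mul_const ‖v‖


end
end

section
/- Let x_0 ∈ ℝ^n, let x* be the unique point with A x* = b and x* ∈ x_0 + R(Aᵀ), let r_0 := g − C x_0, and let d ≤ n be such that x* ∈ x_0 + K_d(C,r_0). Let q_1,…,q_d ∈ ℝ^n be orthonormal vectors such that (q_1,…,q_k) is a basis of K_k(C,r_0) for every k ∈ {1,…,d}, and set μ_i := ⟨x* − x_0, q_i⟩. For k ∈ {0,…,d−1}, let x_k be the unique minimizer of ‖x − x*‖² over x_0 + K_k(C,r_0), e_k := x* − x_k, r_k := g − C x_k, and suppose r_k = Σ_{i=1}^{k+1} u_{i,k+1} q_i with coefficients u_{i,k+1}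 ∈ ℝ. Then u_{k+1,k+1} · μ_{k+1} = ⟨e_k, r_k⟩; in particular, whenever u_{k+1,k+1} ≠ 0, the coordinate μ_{k+1} = ⟨x* − x_0, q_{k+1}⟩ of the unknown solution equals u_{k+1,k+1}^{-1} ⟨e_k, r_k⟩. -/
open scoped RealInnerProductSpace

noncomputable section

theorem stmt18
    {n p : ℕ} (msz : Fin p → ℕ)
    (A : ∀ j : Fin p, Euc n →ₗ[ℝ] Euc (msz j))
    (b : ∀ j : Fin p, Euc (msz j))
    (hcons : ∃ z : Euc n, ∀ j, A j z = b j)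
    (Pj : Fin p → Euc n → Euc n)
    (hPj : ∀ j : Fin p, IsNearestPointMap {z : Euc n | A j z = b j} (Pj j))
    (x0 xs : Euc n) (hxs : ∀ j, A j xs = b j) (hxs' : xs - x0 ∈ RAT msz A)
    (d : ℕ) (hd : d ≤ n)
    (hxsd : xs - x0 ∈ krylov (Cmap msz A) (kacz Pj (0 : Euc n) - Cmap msz A x0) d)
    (q : Fin d → Euc n) (hq : Orthonormal ℝ q)
    (hbasis : ∀ k, 1 ≤ k → k ≤ d →
      krylov (Cmap msz A) (kacz Pj (0 : Euc n) - Cmap msz A x0) k =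
        Submodule.span ℝ (q '' {i : Fin d | (i : ℕ) < k}))
    (k : ℕ) (hk : k < d) (xk : Euc n)
    (hmin : IsUniqueMinimizer xs
      (affKrylov x0 (Cmap msz A) (kacz Pj (0 : Euc n) - Cmap msz A x0) k) xk)
    (rk : Euc n) (hrk : rk = kacz Pj (0 : Euc n) - Cmap msz A xk)
    (u : Fin d → ℝ)
    (hu : rk = ∑ i ∈ Finset.univ.filter (fun i : Fin d => (i : ℕ) < k + 1), u i • q i) :
    u ⟨k, hk⟩ * ⟪xs - x0, q ⟨k, hk⟩⟫ = ⟪xs - xk, rk⟫ ∧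
    (u ⟨k, hk⟩ ≠ 0 →
      ⟪xs - x0, q ⟨k, hk⟩⟫ = (u ⟨k, hk⟩)⁻¹ * ⟪xs - xk, rk⟫) := by
  classical
  set C := Cmap msz A with hC
  set r0 := kacz Pj (0 : Euc n) - C x0 with hr0
  set K := krylov C r0 k with hKdef
  obtain ⟨hxkmem, hltmin⟩ := hmin
  obtain ⟨w, hwK, hxw⟩ := hxkmem
  -- hxw : x0 + w = xk
  have hqmem : ∀ i : Fin d, (i : ℕ) < k → q i ∈ K := by
    intro i hi
    have hk1 : 1 ≤ k := Nat.one_le_iff_ne_zero.mpr (by omega)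
    rw [hKdef, hbasis k hk1 hk.le]
    exact Submodule.subset_span ⟨i, hi, rfl⟩
  have hKle : ∀ v ∈ K, ∀ i : Fin d, k ≤ (i : ℕ) → ⟪v, q i⟫ = 0 := by
    rcases Nat.eq_zero_or_pos k with hk0 | hk1
    · intro v hv i hi
      have : K = ⊥ := by
        rw [hKdef]; subst hk0
        unfold krylov
        convert Submodule.span_empty
        ext v; simp
      rw [this] at hv
      simp only [Submodule.mem_bot] at hv
      simp [hv]
    · intro v hv i hi
      rw [hKdef, hbasis k hk1 hk.le] at hv
      induction hv using Submodule.span_induction with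
      | mem x hx =>
        obtain ⟨j, hj, rfl⟩ := hx
        have hj' : (j : ℕ) < k := hj
        exact hq.2 (fun h : j = i => by subst h; omega)
      | zero => simp
      | add x y _ _ hx hy => rw [inner_add_left, hx, hy]; ring
      | smul c x _ hx => rw [real_inner_smul_left, hx]; ring
  -- orthogonality of the error
  have hperpE : ∀ v ∈ K, ⟪xk - xs, v⟫ = 0 := by
    intro v hv
    by_cases hv0 : v = 0
    · simp [hv0]
    by_contra hc
    set c := ⟪xk - xs, v⟫ with hcdef
    have hnv : (0:ℝ) < ‖v‖ ^ 2 := by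
      have := norm_pos_iff.mpr hv0
      positivity
    set t : ℝ := -c / ‖v‖ ^ 2 with htdef
    have ht0 : t ≠ 0 := by
      simp only [htdef, div_ne_zero_iff, neg_ne_zero]
      exact ⟨hc, hnv.ne'⟩
    have hy : x0 + (w + t • v) ∈ affKrylov x0 C r0 k :=
      ⟨w + t • v, K.add_mem hwK (K.smul_mem t hv), rfl⟩
    have hne : x0 + (w + t • v) ≠ xk := by
      intro h
      rw [← hxw] at h
      have h2 : t • v = 0 := by
        have h' : x0 + w + t • v = x0 + w := by rw [add_assoc]; exact h
        exact add_eq_left.mp h'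
      exact ht0 (by simpa [hv0] using smul_eq_zero.mp h2)
    have hlt := hltmin _ hy hne
    have hexp : x0 + (w + t • v) - xs = (xk - xs) + t • v := by
      rw [← hxw]; beta_reduce; abel
    rw [hexp, norm_add_sq_real, real_inner_smul_right, norm_smul, mul_pow,
      Real.norm_eq_abs, sq_abs] at hlt
    have hlt' : (0:ℝ) < 2 * (t * c) + t ^ 2 * ‖v‖ ^ 2 := by
      have : (inner ℝ (xk - xs) v : ℝ) = c := rfl
      rw [this] at hlt; linarith
    have heq : 2 * (t * c) + t ^ 2 * ‖v‖ ^ 2 = - (c ^ 2 / ‖v‖ ^ 2) := by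
      rw [htdef]; field_simp; ring
    have hc2 : (0:ℝ) < c ^ 2 := lt_of_le_of_ne (sq_nonneg c) (Ne.symm (pow_ne_zero 2 hc))
    have : (0:ℝ) < c ^ 2 / ‖v‖ ^ 2 := div_pos hc2 hnv
    linarith
  have hek : ∀ v ∈ K, ⟪xs - xk, v⟫ = 0 := by
    intro v hv
    have := hperpE v hv
    have h2 : xs - xk = -(xk - xs) := by abel
    rw [h2, inner_neg_left, this, neg_zero]
  have hwq : ⟪w, q ⟨k, hk⟩⟫ = 0 := hKle w hwK ⟨k, hk⟩ le_rfl
  have hmu : ⟪xs - xk, q ⟨k, hk⟩⟫ = ⟪xs - x0, q ⟨k, hk⟩⟫ := by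
    have h2 : xs - xk = (xs - x0) - w := by rw [← hxw]; beta_reduce; abel
    rw [h2, inner_sub_left, hwq, sub_zero]
  have hmain : ⟪xs - xk, rk⟫ = u ⟨k, hk⟩ * ⟪xs - x0, q ⟨k, hk⟩⟫ := by
    rw [hu, inner_sum]
    rw [Finset.sum_eq_single (⟨k, hk⟩ : Fin d)]
    · rw [real_inner_smul_right, hmu]
    · intro i hi hne
      rw [Finset.mem_filter] at hi
      have hik : (i : ℕ) < k := by
        rcases Nat.lt_succ_iff_lt_or_eq.mp hi.2 with h | h
        · exact h
        · exact absurd (Fin.ext h) hne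
      rw [real_inner_smul_right, hek (q i) (hqmem i hik), mul_zero]
    · intro h
      exact absurd (Finset.mem_filter.mpr ⟨Finset.mem_univ _, by simp⟩) h
  refine ⟨hmain.symm, fun hu0 => ?_⟩
  rw [hmain]
  field_simp


end
end
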